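/- Under the hypotheses of the modified Krasnosel'skii–Mann theorem (T nonexpansive, 0 < β_n ≤ 1 with β_n → 1 and ∑|β_n - β_{n-1}| < ∞, 0 < λ_n ≤ 1 with ∑|λ_n - λ_{n-1}| < ∞ and ∑(1-β_n) = ∞), the consecutive differences satisfy ‖x_{n+1} - x_n‖ → 0 as n → +∞. -/

import Mathlib

open Filter Topology Finset

lemma prod_bound (γ : ℕ → ℝ) (hγ0 : ∀ n, 0 ≤ γ n) (hγ1 : ∀ n, γ n ≤ 1) (N n : ℕ) :
    ∏ k ∈ Finset.Ico N n, (1 - γ k) ≤ Real.exp (-∑ k ∈ Finset.Ico N n, γ k) := by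
  calc ∏ k ∈ Finset.Ico N n, (1 - γ k) ≤ ∏ k ∈ Finset.Ico N n, Real.exp (-γ k) := by
        apply Finset.prod_le_prod
        · intro k _; linarith [hγ1 k]
        · intro k _; linarith [Real.add_one_le_exp (-γ k)]
    _ = Real.exp (-∑ k ∈ Finset.Ico N n, γ k) := by
        rw [← Real.exp_sum, Finset.sum_neg_distrib]

lemma rec_bound (a γ c : ℕ → ℝ)
    (hγ0 : ∀ n, 0 ≤ γ n) (hγ1 : ∀ n, γ n ≤ 1) (hc0 : ∀ n, 0 ≤ c n)
    (hrec : ∀ n, a (n+1) ≤ (1 - γ n) * a n + c n) :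
    ∀ N n, N ≤ n → a n ≤ (∏ k ∈ Finset.Ico N n, (1 - γ k)) * a N + ∑ k ∈ Finset.Ico N n, c k := by
  intro N n hNn
  induction n, hNn using Nat.le_induction with
  | base => simp
  | succ n hNn ih =>
      calc a (n+1) ≤ (1 - γ n) * a n + c n := hrec n
        _ ≤ (1 - γ n) * ((∏ k ∈ Finset.Ico N n, (1 - γ k)) * a N + ∑ k ∈ Finset.Ico N n, c k) + c n := by
            have h1 : 0 ≤ 1 - γ n := by linarith [hγ1 n]
            nlinarith [ih, h1]
        _ ≤ (∏ k ∈ Finset.Ico N (n+1), (1 - γ k)) * a N + ∑ k ∈ Finset.Ico N (n+1), c k := by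
            rw [Finset.prod_Ico_succ_top hNn, Finset.sum_Ico_succ_top hNn]
            have h1 : 0 ≤ 1 - γ n := by linarith [hγ1 n]
            have h2 : (1 - γ n) * ∑ k ∈ Finset.Ico N n, c k ≤ ∑ k ∈ Finset.Ico N n, c k := by
              have : 0 ≤ ∑ k ∈ Finset.Ico N n, c k := Finset.sum_nonneg fun k _ => hc0 k
              nlinarith [hγ0 n]
            ring_nf
            nlinarith

lemma tendsto_zero_of_rec (a γ c : ℕ → ℝ)
    (ha : ∀ n, 0 ≤ a n) (hγ0 : ∀ n, 0 ≤ γ n) (hγ1 : ∀ n, γ n ≤ 1)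
    (hγdiv : ¬ Summable γ) (hc : Summable c) (hc0 : ∀ n, 0 ≤ c n)
    (hrec : ∀ n, a (n+1) ≤ (1 - γ n) * a n + c n) :
    Tendsto a atTop (nhds 0) := by
  rw [Metric.tendsto_atTop]
  intro ε hε
  -- choose N with tail sums of c below ε/2
  have hcauchy : CauchySeq (fun n => ∑ i ∈ Finset.range n, c i) :=
    hc.hasSum.tendsto_sum_nat.cauchySeq
  obtain ⟨N, hN⟩ := Metric.cauchySeq_iff'.mp hcauchy (ε/2) (by linarith)
  have htail : ∀ n, N ≤ n → ∑ k ∈ Finset.Ico N n, c k < ε/2 := by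
    intro n hn
    have := hN n hn
    rw [Real.dist_eq] at this
    have heq : ∑ k ∈ Finset.Ico N n, c k =
        (∑ i ∈ Finset.range n, c i) - ∑ i ∈ Finset.range N, c i := by
      rw [Finset.sum_Ico_eq_sub _ hn]
    rw [heq]
    calc (∑ i ∈ Finset.range n, c i) - ∑ i ∈ Finset.range N, c i
        ≤ |(∑ i ∈ Finset.range n, c i) - ∑ i ∈ Finset.range N, c i| := le_abs_self _
      _ < ε/2 := this
  -- partial sums of γ tend to infinity
  have hγtop : Tendsto (fun n => ∑ i ∈ Finset.range n, γ i) atTop atTop := by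
    exact (not_summable_iff_tendsto_nat_atTop_of_nonneg hγ0).mp hγdiv
  -- the product over Ico N n tends to 0
  have hprod : Tendsto (fun n => (∏ k ∈ Finset.Ico N n, (1 - γ k)) * a N) atTop (nhds 0) := by
    have hexp : Tendsto (fun n => Real.exp (-∑ k ∈ Finset.Ico N n, γ k) * a N) atTop (nhds 0) := by
      have h1 : Tendsto (fun n => ∑ k ∈ Finset.Ico N n, γ k) atTop atTop := by
        have hev : ∀ᶠ n in atTop, (∑ i ∈ Finset.range n, γ i) - ∑ i ∈ Finset.range N, γ i =
            ∑ k ∈ Finset.Ico N n, γ k := by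
          filter_upwards [eventually_ge_atTop N] with n hn
          rw [Finset.sum_Ico_eq_sub _ hn]
        exact Tendsto.congr' hev (hγtop.atTop_add tendsto_const_nhds)
      have := (Real.tendsto_exp_neg_atTop_nhds_zero.comp h1).mul_const (a N)
      simpa using this
    apply squeeze_zero' (g := fun n => Real.exp (-∑ k ∈ Finset.Ico N n, γ k) * a N)
    · filter_upwards with n
      apply mul_nonneg _ (ha N)
      apply Finset.prod_nonneg
      intro k _
      linarith [hγ1 k]
    · filter_upwards with n
      exact mul_le_mul_of_nonneg_right (prod_bound γ hγ0 hγ1 N n) (ha N)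
    · exact hexp
  obtain ⟨M, hM⟩ := (Metric.tendsto_atTop.mp hprod (ε/2) (by linarith)) 
  refine ⟨max N M, fun n hn => ?_⟩
  have hnN : N ≤ n := le_trans (le_max_left _ _) hn
  have hnM : M ≤ n := le_trans (le_max_right _ _) hn
  have hb := rec_bound a γ c hγ0 hγ1 hc0 hrec N n hnN
  have h1 := hM n hnM
  rw [Real.dist_eq, sub_zero] at h1 ⊢
  rw [abs_of_nonneg (ha n)]
  have h2 : (∏ k ∈ Finset.Ico N n, (1 - γ k)) * a N < ε/2 :=
    lt_of_abs_lt h1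
  linarith [htail n hnN]


/-- In the modified Krasnosel'skii–Mann algorithm, the consecutive differences
satisfy `‖x (n+1) - x n‖ → 0`. -/
theorem modKM_diff_to_zero
    {H : Type*} [NormedAddCommGroup H] [InnerProductSpace ℝ H] [CompleteSpace H]
    (T : H → H) (hT : ∀ x y : H, ‖T x - T y‖ ≤ ‖x - y‖)
    (hfix_ne : {z : H | T z = z}.Nonempty)
    (β lam : ℕ → ℝ)
    (hβ : ∀ n, 0 < β n ∧ β n ≤ 1)
    (hβlim : Tendsto β atTop (nhds 1))
    (hβdiv : ¬ Summable (fun n => 1 - β n))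
    (hβvar : Summable (fun n => |β (n + 1) - β n|))
    (hlam : ∀ n, 0 < lam n ∧ lam n ≤ 1)
    (hlamvar : Summable (fun n => |lam (n + 1) - lam n|))
    (x : ℕ → H)
    (hiter : ∀ n, x (n + 1) = β n • x n + lam n • (T (β n • x n) - β n • x n)) :
    Tendsto (fun n => ‖x (n + 1) - x n‖) atTop (nhds 0) := by

  classical
  obtain ⟨z, hz⟩ := hfix_ne
  simp only [Set.mem_setOf_eq] at hz
  set M : ℝ := max ‖x 0 - z‖ ‖z‖ with hM
  have hM0 : (0:ℝ) ≤ M := le_trans (norm_nonneg _) (le_max_right _ _)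
  have hzM : ‖z‖ ≤ M := le_max_right _ _
  have hkey : ∀ n, ‖x n - z‖ ≤ M → ‖β n • x n - z‖ ≤ M := by
    intro n hx
    have hid : β n • x n - z = β n • (x n - z) + (β n - 1) • z := by module
    rw [hid]
    have hβn := hβ n
    calc ‖β n • (x n - z) + (β n - 1) • z‖ ≤ ‖β n • (x n - z)‖ + ‖(β n - 1) • z‖ :=
          norm_add_le _ _
      _ = β n * ‖x n - z‖ + (1 - β n) * ‖z‖ := by
          rw [norm_smul, norm_smul, Real.norm_eq_abs, Real.norm_eq_abs,
            abs_of_pos hβn.1, abs_of_nonpos (by linarith [hβn.2] : β n - 1 ≤ 0)]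
          ring
      _ ≤ β n * M + (1 - β n) * M := by nlinarith [hβn.1.le, hβn.2, hzM]
      _ = M := by ring
  have hbd : ∀ n, ‖x n - z‖ ≤ M := by
    intro n
    induction n with
    | zero => exact le_max_left _ _
    | succ n ih =>
        have hy : ‖β n • x n - z‖ ≤ M := hkey n ih
        have hid : x (n+1) - z
            = (1 - lam n) • (β n • x n - z) + lam n • (T (β n • x n) - z) := by
          rw [hiter n]; module
        have hTy : ‖T (β n • x n) - z‖ ≤ ‖β n • x n - z‖ := by
          calc ‖T (β n • x n) - z‖ = ‖T (β n • x n) - T z‖ := by rw [hz]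
            _ ≤ ‖β n • x n - z‖ := hT _ z
        have hl := hlam n
        calc ‖x (n+1) - z‖
            ≤ ‖(1 - lam n) • (β n • x n - z)‖ + ‖lam n • (T (β n • x n) - z)‖ := by
              rw [hid]; exact norm_add_le _ _
          _ = (1 - lam n) * ‖β n • x n - z‖ + lam n * ‖T (β n • x n) - z‖ := by
              rw [norm_smul, norm_smul, Real.norm_eq_abs, Real.norm_eq_abs,
                abs_of_nonneg (by linarith [hl.2] : (0:ℝ) ≤ 1 - lam n),
                abs_of_pos hl.1]
          _ ≤ (1 - lam n) * M + lam n * M := by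
              have h1 : ‖T (β n • x n) - z‖ ≤ M := le_trans hTy hy
              nlinarith [hl.1.le, hl.2, hy]
          _ = M := by ring
  set B : ℝ := M + ‖z‖ with hB
  have hB0 : (0:ℝ) ≤ B := by positivity
  have hxB : ∀ n, ‖x n‖ ≤ B := fun n => by
    calc ‖x n‖ = ‖(x n - z) + z‖ := by rw [sub_add_cancel]
      _ ≤ ‖x n - z‖ + ‖z‖ := norm_add_le _ _
      _ ≤ B := by linarith [hbd n]
  have hyB : ∀ n, ‖β n • x n‖ ≤ B := fun n => by
    rw [norm_smul, Real.norm_eq_abs, abs_of_pos (hβ n).1]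
    nlinarith [(hβ n).1.le, (hβ n).2, hxB n, norm_nonneg (x n)]
  have hTyB : ∀ n, ‖T (β n • x n)‖ ≤ B := fun n => by
    calc ‖T (β n • x n)‖ = ‖(T (β n • x n) - T z) + z‖ := by
          rw [hz, sub_add_cancel]
      _ ≤ ‖T (β n • x n) - T z‖ + ‖z‖ := norm_add_le _ _
      _ ≤ ‖β n • x n - z‖ + ‖z‖ := by linarith [hT (β n • x n) z]
      _ ≤ B := by linarith [hkey n (hbd n)]
  set a : ℕ → ℝ := fun n => ‖x (n+1) - x n‖ with ha'
  set γ : ℕ → ℝ := fun n => 1 - β (n+1) with hγ'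
  set c : ℕ → ℝ := fun n => 2*B*(|β (n+1) - β n| + |lam (n+1) - lam n|) with hc'
  have hrec : ∀ n, a (n+1) ≤ (1 - γ n) * a n + c n := by
    intro n
    have halg : ∀ u v : H,
        (v + lam (n+1) • (T v - v)) - (u + lam n • (T u - u))
          = (1 - lam (n+1)) • (v - u) + lam (n+1) • (T v - T u)
            + (lam (n+1) - lam n) • (T u - u) := by
      intro u v; module
    have hid : x (n+2) - x (n+1)
        = (1 - lam (n+1)) • (β (n+1) • x (n+1) - β n • x n)
          + lam (n+1) • (T (β (n+1) • x (n+1)) - T (β n • x n))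
          + (lam (n+1) - lam n) • (T (β n • x n) - β n • x n) := by
      calc x (n+2) - x (n+1)
          = (β (n+1) • x (n+1) + lam (n+1) • (T (β (n+1) • x (n+1)) - β (n+1) • x (n+1)))
            - (β n • x n + lam n • (T (β n • x n) - β n • x n)) := by
            rw [← hiter n, ← hiter (n+1)]
        _ = _ := halg (β n • x n) (β (n+1) • x (n+1))
    have hystep : ‖β (n+1) • x (n+1) - β n • x n‖
        ≤ β (n+1) * a n + |β (n+1) - β n| * B := by
      have hid2 : β (n+1) • x (n+1) - β n • x n
          = β (n+1) • (x (n+1) - x n) + (β (n+1) - β n) • x n := by module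
      calc ‖β (n+1) • x (n+1) - β n • x n‖
          ≤ ‖β (n+1) • (x (n+1) - x n)‖ + ‖(β (n+1) - β n) • x n‖ := by
            rw [hid2]; exact norm_add_le _ _
        _ ≤ β (n+1) * a n + |β (n+1) - β n| * B := by
            rw [norm_smul, norm_smul, Real.norm_eq_abs, Real.norm_eq_abs,
              abs_of_pos (hβ (n+1)).1]
            have := mul_le_mul_of_nonneg_left (hxB n) (abs_nonneg (β (n+1) - β n))
            have han : a n = ‖x (n+1) - x n‖ := rfl
            rw [han]; linarith
    have hl' := hlam (n+1)
    have hTsub : ‖T (β (n+1) • x (n+1)) - T (β n • x n)‖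
        ≤ ‖β (n+1) • x (n+1) - β n • x n‖ := hT _ _
    have hTy0y0 : ‖T (β n • x n) - β n • x n‖ ≤ 2*B := by
      calc ‖T (β n • x n) - β n • x n‖ ≤ ‖T (β n • x n)‖ + ‖β n • x n‖ :=
            norm_sub_le _ _
        _ ≤ 2*B := by linarith [hTyB n, hyB n]
    calc a (n+1) = ‖x (n+2) - x (n+1)‖ := rfl
      _ ≤ ‖(1 - lam (n+1)) • (β (n+1) • x (n+1) - β n • x n)‖
          + ‖lam (n+1) • (T (β (n+1) • x (n+1)) - T (β n • x n))‖
          + ‖(lam (n+1) - lam n) • (T (β n • x n) - β n • x n)‖ := by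
          rw [hid]
          exact le_trans (norm_add_le _ _) (add_le_add (norm_add_le _ _) le_rfl)
      _ = (1 - lam (n+1)) * ‖β (n+1) • x (n+1) - β n • x n‖
          + lam (n+1) * ‖T (β (n+1) • x (n+1)) - T (β n • x n)‖
          + |lam (n+1) - lam n| * ‖T (β n • x n) - β n • x n‖ := by
          rw [norm_smul, norm_smul, norm_smul, Real.norm_eq_abs, Real.norm_eq_abs,
            Real.norm_eq_abs,
            abs_of_nonneg (by linarith [hl'.2] : (0:ℝ) ≤ 1 - lam (n+1)),
            abs_of_pos hl'.1]
      _ ≤ ‖β (n+1) • x (n+1) - β n • x n‖ + |lam (n+1) - lam n| * (2*B) := by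
          have h1 : lam (n+1) * ‖T (β (n+1) • x (n+1)) - T (β n • x n)‖
              ≤ lam (n+1) * ‖β (n+1) • x (n+1) - β n • x n‖ :=
            mul_le_mul_of_nonneg_left hTsub hl'.1.le
          have h2 : |lam (n+1) - lam n| * ‖T (β n • x n) - β n • x n‖
              ≤ |lam (n+1) - lam n| * (2*B) :=
            mul_le_mul_of_nonneg_left hTy0y0 (abs_nonneg _)
          nlinarith [norm_nonneg (β (n+1) • x (n+1) - β n • x n), hl'.1.le, hl'.2]
      _ ≤ (1 - γ n) * a n + c n := by
          simp only [hγ', hc']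
          have hb0 : (0:ℝ) ≤ |β (n+1) - β n| := abs_nonneg _
          have hl0 : (0:ℝ) ≤ |lam (n+1) - lam n| := abs_nonneg _
          nlinarith [hystep]
  have hγ0 : ∀ n, 0 ≤ γ n := fun n => by simp only [hγ']; linarith [(hβ (n+1)).2]
  have hγ1 : ∀ n, γ n ≤ 1 := fun n => by simp only [hγ']; linarith [(hβ (n+1)).1]
  have hγdiv : ¬ Summable γ := by
    intro hs
    exact hβdiv ((summable_nat_add_iff 1).mp hs)
  have hcs : Summable c := by
    have := (hβvar.add hlamvar).mul_left (2*B)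
    simpa [hc'] using this
  have hc0 : ∀ n, 0 ≤ c n := fun n => by
    simp only [hc']; positivity
  have ha0 : ∀ n, 0 ≤ a n := fun n => norm_nonneg _
  exact tendsto_zero_of_rec a γ c ha0 hγ0 hγ1 hγdiv hcs hc0 hrec
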